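/- arXiv:2312.08076 — 10 statements merged into one kernel-verified Lean document; each statement's English description precedes it below -/
import Mathlib

section
/- Let s1, s2 : [0,∞) → ℝ be differentiable with derivatives v1 = s1', v2 = s2', where v1 and v2 are themselves differentiable and strictly positive at every time t ≥ 0. Assume: (a) s1(0) ≤ s2(0), and whenever τ ≥ 0 satisfies s1(τ) = s2(0), then v1(τ) ≤ v2(0); (b) the strict crossing condition: for all 0 ≤ t_a ≤ t_b, if s1(t_b) = s2(t_a) and v1(t_b) = v2(t_a), then v1'(t_b) < v2'(t_a). Then s1(t) ≤ s2(t) for all t ≥ 0. -/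
open Set Filter

lemma aux_right_pos {h : ℝ → ℝ} {t d : ℝ}
    (hh : HasDerivWithinAt h d (Set.Ioi t) t) (hd : 0 < d) :
    ∀ᶠ x in nhdsWithin t (Set.Ioi t), h t < h x := by
  have hs := hasDerivWithinAt_iff_tendsto_slope.mp hh
  rw [Set.diff_singleton_eq_self (by simp)] at hs
  have h2 : ∀ᶠ x in nhdsWithin t (Set.Ioi t), 0 < slope h t x :=
    hs.eventually (eventually_gt_nhds hd)
  filter_upwards [h2, self_mem_nhdsWithin] with x hx hx'
  have hxt : 0 < x - t := sub_pos.2 hx'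
  have hq : 0 < (h x - h t) / (x - t) := by simpa [slope_def_field] using hx
  have := mul_pos hq hxt
  rw [div_mul_cancel₀] at this
  · linarith
  · exact ne_of_gt hxt

lemma aux_right_neg {h : ℝ → ℝ} {t d : ℝ}
    (hh : HasDerivWithinAt h d (Set.Ioi t) t) (hd : d < 0) :
    ∀ᶠ x in nhdsWithin t (Set.Ioi t), h x < h t := by
  have := aux_right_pos (h := fun x => -h x) (d := -d) hh.neg (by linarith)
  filter_upwards [this] with x hx
  simpa using hx

lemma aux_barrier {w : ℝ → ℝ} {l r : ℝ} (hlr : l ≤ r)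
    (hw : ContinuousOn w (Set.Icc l r)) (h0 : w l ≤ 0)
    (hz : ∀ t ∈ Set.Ico l r, w t = 0 → ∀ᶠ x in nhdsWithin t (Set.Ioi t), w x < 0) :
    ∀ t ∈ Set.Icc l r, w t ≤ 0 := by
  by_contra hc
  push_neg at hc
  obtain ⟨t₁, ht₁, ht₁pos⟩ := hc
  set S : Set ℝ := Set.Icc l t₁ ∩ w ⁻¹' Set.Iic 0 with hS
  have hSclosed : IsClosed S :=
    ContinuousOn.preimage_isClosed_of_isClosed
      (hw.mono (Set.Icc_subset_Icc le_rfl ht₁.2)) isClosed_Icc isClosed_Iic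
  have hlS : l ∈ S := ⟨⟨le_rfl, ht₁.1⟩, h0⟩
  have hSne : S.Nonempty := ⟨l, hlS⟩
  have hSbdd : BddAbove S := ⟨t₁, fun x hx => hx.1.2⟩
  set t₀ := sSup S with ht₀
  have ht₀S : t₀ ∈ S := hSclosed.csSup_mem hSne hSbdd
  have ht₀le : t₀ ≤ t₁ := ht₀S.1.2
  have ht₀l : l ≤ t₀ := ht₀S.1.1
  have ht₀ne : t₀ ≠ t₁ := by
    intro h; rw [h] at ht₀S; exact absurd ht₀S.2 (by simpa using ht₁pos)
  have ht₀lt : t₀ < t₁ := lt_of_le_of_ne ht₀le ht₀ne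
  have hpos : ∀ x ∈ Set.Ioc t₀ t₁, 0 < w x := by
    intro x hx
    by_contra hneg
    push_neg at hneg
    have : x ∈ S := ⟨⟨ht₀l.trans hx.1.le, hx.2⟩, hneg⟩
    exact absurd (le_csSup hSbdd this) (not_le.2 hx.1)
  have htend : Filter.Tendsto w (nhdsWithin t₀ (Set.Ioc t₀ t₁)) (nhds (w t₀)) := by
    have : ContinuousWithinAt w (Set.Icc l r) t₀ :=
      hw t₀ ⟨ht₀l, ht₀le.trans ht₁.2⟩
    exact this.mono (fun x hx => ⟨ht₀l.trans hx.1.le, hx.2.trans ht₁.2⟩)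
  have hNB : (nhdsWithin t₀ (Set.Ioc t₀ t₁)).NeBot := by
    rw [nhdsWithin_Ioc_eq_nhdsGT ht₀lt]
    infer_instance
  have hge : 0 ≤ w t₀ :=
    ge_of_tendsto htend (by
      filter_upwards [self_mem_nhdsWithin] with x hx
      exact (hpos x hx).le)
  have hweq : w t₀ = 0 := le_antisymm ht₀S.2 hge
  have hev := hz t₀ ⟨ht₀l, lt_of_lt_of_le ht₀lt ht₁.2⟩ hweq
  have hIoc : Set.Ioc t₀ t₁ ∈ nhdsWithin t₀ (Set.Ioi t₀) :=
    Ioc_mem_nhdsGT_of_mem ⟨le_rfl, ht₀lt⟩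
  have : ∀ᶠ x in nhdsWithin t₀ (Set.Ioi t₀), False := by
    filter_upwards [hev, hIoc] with x hx hx'
    exact absurd (hpos x hx') (not_lt.2 hx.le)
  exact this.exists.elim (fun _ h => h)

lemma aux_inv_deriv {f φ : ℝ → ℝ} {M d y₀ : ℝ}
    (hφ : ∀ y ∈ Set.Icc (f 0) (f M), φ y ∈ Set.Icc 0 M ∧ f (φ y) = y)
    (hy₀ : y₀ ∈ Set.Icc (f 0) (f M))
    (hcont : ContinuousWithinAt φ (Set.Icc (f 0) (f M)) y₀)
    (hf' : HasDerivWithinAt f d (Set.Icc 0 M) (φ y₀)) (hd : d ≠ 0) :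
    HasDerivWithinAt φ d⁻¹ (Set.Icc (f 0) (f M)) y₀ := by
  set J := Set.Icc (f 0) (f M) with hJ
  rw [hasDerivWithinAt_iff_tendsto_slope] at hf' ⊢
  have h1 : Filter.Tendsto φ (nhdsWithin y₀ (J \ {y₀}))
      (nhdsWithin (φ y₀) (Set.Icc 0 M \ {φ y₀})) := by
    rw [tendsto_nhdsWithin_iff]
    constructor
    · exact (hcont.mono Set.diff_subset).tendsto
    · filter_upwards [self_mem_nhdsWithin] with y hy
      refine ⟨(hφ y hy.1).1, ?_⟩
      intro h
      apply hy.2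
      have := (hφ y hy.1).2
      rw [h, (hφ y₀ hy₀).2] at this
      simp [this]
  have h2 : Filter.Tendsto (fun y => slope f (φ y₀) (φ y)) (nhdsWithin y₀ (J \ {y₀}))
      (nhds d) := hf'.comp h1
  have h3 := h2.inv₀ hd
  refine h3.congr' ?_
  filter_upwards [self_mem_nhdsWithin] with y hy
  have hne : φ y - φ y₀ ≠ 0 := by
    intro h
    apply hy.2
    have h' : φ y = φ y₀ := by linarith [sub_eq_zero.mp h]
    have := (hφ y hy.1).2
    rw [h', (hφ y₀ hy₀).2] at this
    simp [this]
  rw [slope_def_field, slope_def_field, (hφ y hy.1).2, (hφ y₀ hy₀).2, inv_div]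

lemma aux_inv_cont {f φ : ℝ → ℝ} {M : ℝ} (hM : 0 < M)
    (hmono : StrictMonoOn f (Set.Icc 0 M))
    (hφ : ∀ y ∈ Set.Icc (f 0) (f M), φ y ∈ Set.Icc 0 M ∧ f (φ y) = y) :
    ∀ y ∈ Set.Icc (f 0) (f M), ContinuousWithinAt φ (Set.Icc (f 0) (f M)) y := by
  have h0M : (0:ℝ) ∈ Set.Icc 0 M := ⟨le_rfl, hM.le⟩
  have hMM : M ∈ Set.Icc (0:ℝ) M := ⟨hM.le, le_rfl⟩
  have hf0M : f 0 < f M := hmono h0M hMM hM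
  have hφval : ∀ x ∈ Set.Icc 0 M, φ (f x) = x := by
    intro x hx
    have hfx : f x ∈ Set.Icc (f 0) (f M) :=
      ⟨hmono.monotoneOn h0M hx hx.1, hmono.monotoneOn hx hMM hx.2⟩
    exact hmono.injOn (hφ _ hfx).1 hx (hφ _ hfx).2
  have hφmono : StrictMonoOn φ (Set.Icc (f 0) (f M)) := by
    intro y1 h1 y2 h2 h12
    refine (hmono.lt_iff_lt (hφ _ h1).1 (hφ _ h2).1).mp ?_
    rw [(hφ _ h1).2, (hφ _ h2).2]; exact h12
  intro y hy
  have hRight : y < f M → ContinuousWithinAt φ (Set.Ici y) y := by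
    intro hyT
    refine hφmono.continuousWithinAt_right_of_exists_between
      (Icc_mem_nhdsGE_of_mem ⟨hy.1, hyT⟩) ?_
    intro b hb
    have hφyM : φ y < M := by
      refine (hmono.lt_iff_lt (hφ _ hy).1 hMM).mp ?_
      rw [(hφ _ hy).2]; exact hyT
    set x' := min b M with hx'
    have hx'mem : x' ∈ Set.Icc (0:ℝ) M :=
      ⟨le_trans (hφ _ hy).1.1 (lt_min hb hφyM).le, min_le_right _ _⟩
    refine ⟨f x', ⟨hmono.monotoneOn h0M hx'mem hx'mem.1,
      hmono.monotoneOn hx'mem hMM hx'mem.2⟩, ?_⟩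
    rw [hφval x' hx'mem]
    exact ⟨lt_min hb hφyM, min_le_left _ _⟩
  have hLeft : f 0 < y → ContinuousWithinAt φ (Set.Iic y) y := by
    intro hy0
    refine hφmono.continuousWithinAt_left_of_exists_between
      (Icc_mem_nhdsLE_of_mem ⟨hy0, hy.2⟩) ?_
    intro b hb
    have hφy0 : 0 < φ y := by
      refine (hmono.lt_iff_lt h0M (hφ _ hy).1).mp ?_
      rw [(hφ _ hy).2]; exact hy0
    set x' := max b 0 with hx'
    have hx'mem : x' ∈ Set.Icc (0:ℝ) M :=
      ⟨le_max_right _ _, max_le (hb.le.trans (hφ _ hy).1.2) hM.le⟩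
    refine ⟨f x', ⟨hmono.monotoneOn h0M hx'mem hx'mem.1,
      hmono.monotoneOn hx'mem hMM hx'mem.2⟩, ?_⟩
    rw [hφval x' hx'mem]
    exact ⟨le_max_left _ _, max_lt hb hφy0⟩
  rcases eq_or_lt_of_le hy.2 with hT | hT
  · exact (hLeft (hT ▸ hf0M)).mono (fun x hx => hx.2.trans_eq hT.symm)
  · rcases eq_or_lt_of_le hy.1 with h0 | h0
    · exact (hRight hT).mono (fun x hx => h0 ▸ hx.1)
    · exact ((hRight hT).union (hLeft h0)).mono
        (fun x _ => (le_total y x).elim Or.inl Or.inr)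

/-- **Monotonicity in the Position Domain** (paper's Theorem 1, precise version).
`s1, s2 : [0,∞) → ℝ` are differentiable positions with derivatives (velocities)
`v1 = s1'`, `v2 = s2'`, the velocities are differentiable with derivatives
(accelerations) `a1 = v1'`, `a2 = v2'` and strictly positive for all `t ≥ 0`.
Assumptions: (a) ordered initial data, and whenever `s1 τ = s2 0` for `τ ≥ 0`
then `v1 τ ≤ v2 0`; (b) the strict crossing condition.  Conclusion: the
positions stay ordered for all time. -/
theorem position_monotonicity
    (s1 s2 v1 v2 a1 a2 : ℝ → ℝ)
    (hs1 : ∀ t, 0 ≤ t → HasDerivAt s1 (v1 t) t)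
    (hs2 : ∀ t, 0 ≤ t → HasDerivAt s2 (v2 t) t)
    (hv1 : ∀ t, 0 ≤ t → HasDerivAt v1 (a1 t) t)
    (hv2 : ∀ t, 0 ≤ t → HasDerivAt v2 (a2 t) t)
    (hv1pos : ∀ t, 0 ≤ t → 0 < v1 t)
    (hv2pos : ∀ t, 0 ≤ t → 0 < v2 t)
    (hinit_s : s1 0 ≤ s2 0)
    (hinit_v : ∀ τ, 0 ≤ τ → s1 τ = s2 0 → v1 τ ≤ v2 0)
    (hcross : ∀ ta tb, 0 ≤ ta → ta ≤ tb →
      s1 tb = s2 ta → v1 tb = v2 ta → a1 tb < a2 ta) :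
    ∀ t, 0 ≤ t → s1 t ≤ s2 t := by
  intro T hT
  by_contra hlt
  push_neg at hlt
  -- basic continuity and monotonicity facts
  have cont1 : ContinuousOn s1 (Set.Ici 0) :=
    fun x hx => (hs1 x hx).continuousAt.continuousWithinAt
  have cont2 : ContinuousOn s2 (Set.Ici 0) :=
    fun x hx => (hs2 x hx).continuousAt.continuousWithinAt
  have contv1 : ContinuousOn v1 (Set.Ici 0) :=
    fun x hx => (hv1 x hx).continuousAt.continuousWithinAt
  have contv2 : ContinuousOn v2 (Set.Ici 0) :=
    fun x hx => (hv2 x hx).continuousAt.continuousWithinAt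
  have mono1 : StrictMonoOn s1 (Set.Ici 0) := by
    apply strictMonoOn_of_deriv_pos (convex_Ici 0) cont1
    intro x hx
    rw [interior_Ici] at hx
    rw [(hs1 x hx.le).deriv]
    exact hv1pos x hx.le
  have mono2 : StrictMonoOn s2 (Set.Ici 0) := by
    apply strictMonoOn_of_deriv_pos (convex_Ici 0) cont2
    intro x hx
    rw [interior_Ici] at hx
    rw [(hs2 x hx.le).deriv]
    exact hv2pos x hx.le
  have hTmem : T ∈ Set.Ici (0:ℝ) := hT
  have hs20T : s2 0 ≤ s2 T := mono2.monotoneOn Set.self_mem_Ici hTmem hT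
  have hs1lt : s1 0 < s1 T := lt_of_le_of_lt (hinit_s.trans hs20T) hlt
  have hT0 : 0 < T := by
    rcases eq_or_lt_of_le hT with h | h
    · exfalso; rw [← h] at hs1lt; exact lt_irrefl _ hs1lt
    · exact h
  have monoI : StrictMonoOn s1 (Set.Icc 0 T) := mono1.mono Set.Icc_subset_Ici_self
  -- the inverse of s1 on [0, T]
  set φ := Function.invFunOn s1 (Set.Icc 0 T) with hφdef
  have hexists : ∀ y ∈ Set.Icc (s1 0) (s1 T), ∃ x ∈ Set.Icc 0 T, s1 x = y := by
    intro y hy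
    obtain ⟨x, hx, hxe⟩ :=
      intermediate_value_Icc hT (cont1.mono Set.Icc_subset_Ici_self) hy
    exact ⟨x, hx, hxe⟩
  have hφ : ∀ y ∈ Set.Icc (s1 0) (s1 T), φ y ∈ Set.Icc 0 T ∧ s1 (φ y) = y := fun y hy =>
    ⟨Function.invFunOn_mem (hexists y hy), Function.invFunOn_eq (hexists y hy)⟩
  have hφcont := aux_inv_cont hT0 monoI hφ
  -- the time-lag function u
  set u := fun x => φ (s2 x) with hudef
  have hmemJ : ∀ x ∈ Set.Icc 0 T, s2 x ∈ Set.Icc (s1 0) (s1 T) := by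
    intro x hx
    have hxI : x ∈ Set.Ici (0:ℝ) := hx.1
    constructor
    · exact hinit_s.trans (mono2.monotoneOn Set.self_mem_Ici hxI hx.1)
    · exact (mono2.monotoneOn hxI hTmem hx.2).trans hlt.le
  have hu : ∀ x ∈ Set.Icc 0 T, u x ∈ Set.Icc 0 T ∧ s1 (u x) = s2 x :=
    fun x hx => hφ _ (hmemJ x hx)
  have hucont : ContinuousOn u (Set.Icc 0 T) := by
    intro x hx
    exact ContinuousWithinAt.comp (hφcont _ (hmemJ x hx))
      ((cont2.mono Set.Icc_subset_Ici_self) x hx) hmemJ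
  -- the bad set B and its infimum
  set B := {x ∈ Set.Icc 0 T | u x < x} with hBdef
  have hTB : T ∈ B := by
    refine ⟨Set.right_mem_Icc.mpr hT, ?_⟩
    have h1 : s1 (u T) = s2 T := (hu T (Set.right_mem_Icc.mpr hT)).2
    have h2 : s1 (u T) < s1 T := by rw [h1]; exact hlt
    exact (mono1.lt_iff_lt ((hu T (Set.right_mem_Icc.mpr hT)).1.1) hTmem).mp h2
  have hBne : B.Nonempty := ⟨T, hTB⟩
  have hBbdd : BddBelow B := ⟨0, fun x hx => hx.1.1⟩
  set ts := sInf B with htsdef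
  have hts_ge0 : 0 ≤ ts := le_csInf hBne (fun x hx => hx.1.1)
  have hts_leT : ts ≤ T := csInf_le hBbdd hTB
  have htsmem : ts ∈ Set.Icc (0:ℝ) T := ⟨hts_ge0, hts_leT⟩
  have hnotB : ∀ x ∈ Set.Icc (0:ℝ) T, x < ts → x ≤ u x := by
    intro x hx hxts
    by_contra h
    push_neg at h
    exact absurd (csInf_le hBbdd ⟨hx, h⟩) (not_le.2 hxts)
  have hue : u ts = ts := by
    have hle : u ts ≤ ts := by
      set C := Set.Icc (0:ℝ) T ∩ (fun x => u x - x) ⁻¹' Set.Iic 0 with hC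
      have hCclosed : IsClosed C :=
        ContinuousOn.preimage_isClosed_of_isClosed
          (hucont.sub (continuousOn_id)) isClosed_Icc isClosed_Iic
      have hBsub : B ⊆ C := fun x hx => ⟨hx.1, by simp; linarith [hx.2]⟩
      have hcl : ts ∈ closure B := csInf_mem_closure hBne hBbdd
      have : ts ∈ C := (hCclosed.closure_subset_iff.mpr hBsub) hcl
      have := this.2
      simp at this
      linarith
    have hge : ts ≤ u ts := by
      rcases eq_or_lt_of_le hts_ge0 with h0 | h0
      · rw [← h0]; exact (hu 0 ⟨le_rfl, hT⟩).1.1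
      · have hNB : (nhdsWithin ts (Set.Ico 0 ts)).NeBot := by
          rw [mem_closure_iff_nhdsWithin_neBot.symm ]
          · rw [closure_Ico (ne_of_lt h0)]
            exact ⟨hts_ge0, le_rfl⟩
        have htend : Filter.Tendsto (fun x => u x - x) (nhdsWithin ts (Set.Ico 0 ts))
            (nhds (u ts - ts)) := by
          have h1 : ContinuousWithinAt (fun x => u x - x) (Set.Icc 0 T) ts :=
            (hucont.sub continuousOn_id) ts htsmem
          exact h1.mono (fun x hx => ⟨hx.1, hx.2.le.trans hts_leT⟩)
        have hev : ∀ᶠ x in nhdsWithin ts (Set.Ico 0 ts), 0 ≤ u x - x := by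
          filter_upwards [self_mem_nhdsWithin] with x hx
          have := hnotB x ⟨hx.1, hx.2.le.trans hts_leT⟩ hx.2
          linarith
        have := ge_of_tendsto htend hev
        linarith
    linarith
  have htsltT : ts < T := by
    rcases eq_or_lt_of_le hts_leT with h | h
    · exfalso; rw [h] at hue; exact absurd hue (ne_of_lt hTB.2)
    · exact h
  -- the velocity comparison function w
  set w := fun x => v1 (u x) - v2 x with hwdef
  have hwcont : ContinuousOn w (Set.Icc 0 ts) := by
    have h1 : ContinuousOn (fun x => v1 (u x)) (Set.Icc 0 T) := by
      intro x hx
      exact ContinuousWithinAt.comp (contv1 _ ((hu x hx).1.1))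
        (hucont x hx) (fun y hy => (hu y hy).1.1)
    exact ((h1.sub (contv2.mono Set.Icc_subset_Ici_self)).mono
      (Set.Icc_subset_Icc le_rfl hts_leT))
  have hw0 : w 0 ≤ 0 := by
    have h0mem : (0:ℝ) ∈ Set.Icc 0 T := ⟨le_rfl, hT⟩
    have := hinit_v (u 0) (hu 0 h0mem).1.1 (hu 0 h0mem).2
    simp only [hwdef]
    linarith
  have hwle : ∀ x ∈ Set.Icc 0 ts, w x ≤ 0 := by
    apply aux_barrier hts_ge0 hwcont hw0
    intro t₀ ht₀ hwt₀
    have ht₀T : t₀ ∈ Set.Icc 0 T := ⟨ht₀.1, (ht₀.2.trans_le hts_leT).le⟩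
    have ht₀ltT : t₀ < T := lt_of_lt_of_le ht₀.2 hts_leT
    have hx₀ := hu t₀ ht₀T
    have ht₀le : t₀ ≤ u t₀ := hnotB t₀ ht₀T ht₀.2
    have hveq : v1 (u t₀) = v2 t₀ := by
      have : v1 (u t₀) - v2 t₀ = 0 := hwt₀
      linarith
    have hacc : a1 (u t₀) < a2 t₀ := hcross t₀ (u t₀) ht₀.1 ht₀le hx₀.2 hveq
    have hy₀ := hmemJ t₀ ht₀T
    have hd1 : HasDerivWithinAt s1 (v1 (u t₀)) (Set.Icc 0 T) (φ (s2 t₀)) :=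
      (hs1 _ (hφ _ hy₀).1.1).hasDerivWithinAt
    have hφd : HasDerivWithinAt φ (v1 (u t₀))⁻¹ (Set.Icc (s1 0) (s1 T)) (s2 t₀) :=
      aux_inv_deriv hφ hy₀ (hφcont _ hy₀) hd1 (ne_of_gt (hv1pos _ (hφ _ hy₀).1.1))
    have hud : HasDerivWithinAt u ((v1 (u t₀))⁻¹ * v2 t₀) (Set.Icc t₀ T) t₀ :=
      HasDerivWithinAt.comp t₀ hφd ((hs2 t₀ ht₀.1).hasDerivWithinAt)
        (fun x hx => hmemJ x ⟨ht₀.1.trans hx.1, hx.2⟩)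
    have hv1ud : HasDerivWithinAt (fun x => v1 (u x))
        (a1 (u t₀) * ((v1 (u t₀))⁻¹ * v2 t₀)) (Set.Icc t₀ T) t₀ :=
      HasDerivWithinAt.comp t₀ ((hv1 _ hx₀.1.1).hasDerivWithinAt) hud
        (fun x hx => (hu x ⟨ht₀.1.trans hx.1, hx.2⟩).1)
    have hwd : HasDerivWithinAt w (a1 (u t₀) * ((v1 (u t₀))⁻¹ * v2 t₀) - a2 t₀)
        (Set.Icc t₀ T) t₀ :=
      hv1ud.sub ((hv2 t₀ ht₀.1).hasDerivWithinAt)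
    have hval : a1 (u t₀) * ((v1 (u t₀))⁻¹ * v2 t₀) - a2 t₀ = a1 (u t₀) - a2 t₀ := by
      rw [hveq, inv_mul_cancel₀ (ne_of_gt (hv2pos t₀ ht₀.1)), mul_one]
    rw [hval] at hwd
    have hwd' : HasDerivWithinAt w (a1 (u t₀) - a2 t₀) (Set.Ioi t₀) t₀ :=
      (hwd.mono Set.Ioc_subset_Icc_self).mono_of_mem_nhdsWithin
        (Ioc_mem_nhdsGT_of_mem ⟨le_rfl, ht₀ltT⟩)
    have hev := aux_right_neg hwd' (by linarith)
    filter_upwards [hev] with x hx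
    rw [hwt₀] at hx
    exact hx
  -- final contradiction via p = s2 - s1
  have hwts : v1 ts ≤ v2 ts := by
    have h := hwle ts (Set.right_mem_Icc.mpr hts_ge0)
    have h2 : v1 (u ts) - v2 ts ≤ 0 := h
    rw [hue] at h2
    linarith
  have hpts : s2 ts = s1 ts := by
    have h := (hu ts htsmem).2
    rw [hue] at h
    exact h.symm
  set p := fun x => s2 x - s1 x with hpdef
  have hpts0 : p ts = 0 := by simp only [hpdef]; rw [hpts]; ring
  have hIoo : ∃ c, ts < c ∧ ∀ x ∈ Set.Ioo ts c, 0 < p x := by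
    rcases eq_or_lt_of_le hwts with heq | hlt2
    · have hacc : a1 ts < a2 ts := hcross ts ts hts_ge0 le_rfl hpts.symm heq
      have hqd : HasDerivWithinAt (fun x => v2 x - v1 x) (a2 ts - a1 ts)
          (Set.Ioi ts) ts :=
        ((hv2 ts hts_ge0).sub (hv1 ts hts_ge0)).hasDerivWithinAt
      have hev := aux_right_pos hqd (by linarith)
      have hev' : ∀ᶠ x in nhdsWithin ts (Set.Ioi ts), 0 < v2 x - v1 x := by
        filter_upwards [hev] with x hx
        have : v2 ts - v1 ts = 0 := by rw [heq]; ring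
        linarith
      obtain ⟨c, hc, hsub⟩ := mem_nhdsGT_iff_exists_Ioo_subset.mp hev'
      refine ⟨c, hc, ?_⟩
      have hmonop : StrictMonoOn p (Set.Ico ts c) := by
        apply strictMonoOn_of_deriv_pos (convex_Ico _ _)
        · exact (cont2.sub cont1).mono (fun x hx => hts_ge0.trans hx.1)
        · intro x hx
          rw [interior_Ico] at hx
          have hx0 : (0:ℝ) ≤ x := hts_ge0.trans hx.1.le
          rw [HasDerivAt.deriv (f := p) ((hs2 x hx0).sub (hs1 x hx0))]
          exact hsub hx
      intro x hx
      have := hmonop (Set.left_mem_Ico.mpr hc) ⟨hx.1.le, hx.2⟩ hx.1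
      rw [hpts0] at this
      exact this
    · have hpd : HasDerivWithinAt p (v2 ts - v1 ts) (Set.Ioi ts) ts :=
        ((hs2 ts hts_ge0).sub (hs1 ts hts_ge0)).hasDerivWithinAt
      have hev := aux_right_pos hpd (by linarith)
      have hev' : ∀ᶠ x in nhdsWithin ts (Set.Ioi ts), 0 < p x := by
        filter_upwards [hev] with x hx
        rw [hpts0] at hx
        exact hx
      obtain ⟨c, hc, hsub⟩ := mem_nhdsGT_iff_exists_Ioo_subset.mp hev'
      exact ⟨c, hc, fun x hx => hsub hx⟩
  obtain ⟨c, hc, hppos⟩ := hIoo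
  obtain ⟨b, hbB, hbc⟩ := exists_lt_of_csInf_lt hBne (show sInf B < c from hc)
  have hbt : ts < b := by
    rcases eq_or_lt_of_le (csInf_le hBbdd hbB) with h | h
    · exfalso
      rw [← h] at hbB
      exact absurd hue (ne_of_lt hbB.2)
    · exact h
  have hppb : 0 < p b := hppos b ⟨hbt, hbc⟩
  have hs2b : s2 b < s1 b := by
    have h1 : s1 (u b) = s2 b := (hu b hbB.1).2
    have h2 : s1 (u b) < s1 b := mono1 ((hu b hbB.1).1.1) (hbB.1.1) hbB.2
    rw [h1] at h2
    exact h2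
  have : p b < 0 := by simp only [hpdef]; linarith
  linarith
end

section
/- Fix v_max > 0. Let a_lo1 ≤ a_hi1 and a_lo2 ≤ a_hi2 be two pairs of acceleration limits with a_lo1 ≤ a_lo2 and a_hi1 ≤ a_hi2, and let a1 ≤ a2 and w1 ≤ w2 be reals satisfying a_lo1 + w1 ≤ 0 and a_hi2 + w2 ≥ 0. Then for every v ∈ ℝ: Φ(v, a1, w1; a_lo1, a_hi1) ≤ Φ(v, a2, w2; a_lo2, a_hi2). -/
/-- The saturated acceleration function of the paper's longitudinal vehicle
model (Eq. (4)) with position-independent acceleration limits `a_lo ≤ a_hi`: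
`Φ(v, a, w) = 0` if (`v ≤ 0` and `a + w ≤ 0`) or (`v ≥ v_max` and `a + w ≥ 0`),
and `Φ(v, a, w) = max(a_lo, min(a_hi, a)) + w` otherwise. -/
noncomputable def Phi (vmax alo ahi v a w : ℝ) : ℝ :=
  if (v ≤ 0 ∧ a + w ≤ 0) ∨ (vmax ≤ v ∧ 0 ≤ a + w) then 0
  else max alo (min ahi a) + w

/-- **Monotonicity of the model's right-hand side** in the input, the
disturbance and both acceleration limits (core of inequality (12) in the
proof of the paper's Theorem 1). -/
theorem Phi_monotone
    (vmax : ℝ) (hvmax : 0 < vmax)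
    (alo1 ahi1 alo2 ahi2 : ℝ)
    (h1 : alo1 ≤ ahi1) (h2 : alo2 ≤ ahi2)
    (hlo : alo1 ≤ alo2) (hhi : ahi1 ≤ ahi2)
    (a1 a2 w1 w2 : ℝ) (ha : a1 ≤ a2) (hw : w1 ≤ w2)
    (hbrake : alo1 + w1 ≤ 0) (hengine : 0 ≤ ahi2 + w2) :
    ∀ v : ℝ, Phi vmax alo1 ahi1 v a1 w1 ≤ Phi vmax alo2 ahi2 v a2 w2 := by
  intro v
  unfold Phi
  split_ifs with hA hB hB
  · exact le_refl 0
  · -- Φ1 = 0, Φ2 = sat2 + w2 : show 0 ≤ sat2 + w2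
    rcases hA with ⟨hv, _⟩ | ⟨hv, haw⟩
    · push_neg at hB
      have h2' := hB.1 hv
      have : 0 ≤ min ahi2 a2 + w2 := by
        rcases le_total ahi2 a2 with h | h
        · simpa [min_eq_left h] using hengine
        · simp only [min_eq_right h]; linarith
      have : min ahi2 a2 + w2 ≤ max alo2 (min ahi2 a2) + w2 := by
        gcongr; exact le_max_right _ _
      linarith
    · exfalso
      push_neg at hB
      have hvpos : ¬ v ≤ 0 := by linarith
      exact absurd (hB.2 hv) (by push_neg; linarith)
  · -- Φ1 = sat1 + w1, Φ2 = 0 : show sat1 + w1 ≤ 0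
    rcases hB with ⟨hv, haw⟩ | ⟨hv, haw⟩
    · exfalso; push_neg at hA; exact absurd (hA.1 hv) (by push_neg; linarith)
    · push_neg at hA
      have hvpos : ¬ v ≤ 0 := by linarith
      have h1w : a1 + w1 < 0 := hA.2 hv
      have : min ahi1 a1 ≤ a1 := min_le_right _ _
      have hmax : max alo1 (min ahi1 a1) + w1 ≤ 0 := by
        rcases max_cases alo1 (min ahi1 a1) with ⟨h, _⟩ | ⟨h, _⟩ <;> rw [h] <;> linarith
      exact hmax
  · exact add_le_add (max_le_max hlo (min_le_min hhi ha)) hw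
end

section
/- Fix v_max > 0, acceleration limits a_lo ≤ a_hi, a step size Δ > 0, a disturbance w : [0,∞) → ℝ with a_lo + w(t) ≤ 0 ≤ a_hi + w(t) for all t, and a non-increasing input a : [0,∞) → ℝ. Define the shifted input a_(t) = a(t + Δ) and the zero-order-hold input ā(t) = a(Δ·⌊t/Δ⌋). Then (i) a_(t) ≤ a(t) ≤ ā(t) for all t ≥ 0; and (ii) if v_, v, v̄ : [0,∞) → ℝ are differentiable functions with the same initial value satisfying v_' (t) = Φ(v_(t), a_(t), w(t); a_lo, a_hi), v'(t) = Φ(v(t), a(t), w(t); a_lo, a_hi), and v̄'(t) = Φ(v̄(t), ā(t), w(t); a_lo, a_hi) for all t, then for every t ≥ 0 the positions satisfy ∫₀ᵗ v_ ≤ ∫₀ᵗ v ≤ ∫₀ᵗ v̄. -/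
/-- Key monotonicity of `Phi`: a smaller state with a larger input has a
larger saturated acceleration, under the disturbance bounds. -/
lemma Phi_le (vmax alo ahi : ℝ) {x y a1 a2 w : ℝ}
    (hw1 : alo + w ≤ 0) (hw2 : 0 ≤ ahi + w) (hxy : x ≤ y) (ha : a2 ≤ a1) :
    Phi vmax alo ahi y a2 w ≤ Phi vmax alo ahi x a1 w := by
  have hC1 : ∀ b : ℝ, b + w ≤ 0 → max alo (min ahi b) + w ≤ 0 := by
    intro b hb
    have h1 : max alo (min ahi b) ≤ max alo b :=
      max_le_max le_rfl (min_le_right _ _)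
    have h2 : max alo b + w ≤ 0 := by
      rcases max_cases alo b with ⟨h, _⟩ | ⟨h, _⟩ <;> linarith
    linarith
  have hC2 : ∀ b : ℝ, 0 ≤ b + w → 0 ≤ max alo (min ahi b) + w := by
    intro b hb
    have h1 : min ahi b ≤ max alo (min ahi b) := le_max_right _ _
    rcases min_cases ahi b with ⟨h, _⟩ | ⟨h, _⟩ <;> linarith
  have hCm : max alo (min ahi a2) + w ≤ max alo (min ahi a1) + w := by
    have := max_le_max (le_refl alo) (min_le_min (le_refl ahi) ha)
    linarith
  unfold Phi
  split_ifs with h1 h2 h2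
  · exact le_refl _
  · -- y saturated, x unsaturated: need 0 ≤ C a1
    push_neg at h2
    rcases h1 with ⟨hy0, ha2⟩ | ⟨hyv, ha2⟩
    · have hx0 : x ≤ 0 := le_trans hxy hy0
      have := h2.1 hx0
      exact hC2 a1 (by linarith)
    · exact hC2 a1 (by linarith)
  · -- y unsaturated, x saturated: need C a2 ≤ 0
    push_neg at h1
    rcases h2 with ⟨hx0, ha1⟩ | ⟨hxv, ha1⟩
    · exact hC1 a2 (by linarith)
    · have hyv : vmax ≤ y := le_trans hxv hxy
      have := h1.2 hyv
      exact hC1 a2 (by linarith)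
  · exact hCm

/-- Comparison of solutions: a solution driven by a pointwise smaller input
stays below a solution driven by a larger input, given equal/ordered initial
values. -/
lemma sol_le (vmax alo ahi : ℝ) (w b c x y : ℝ → ℝ)
    (hw : ∀ t, 0 ≤ t → alo + w t ≤ 0 ∧ 0 ≤ ahi + w t)
    (hbc : ∀ t, 0 ≤ t → c t ≤ b t)
    (hx : ∀ t, 0 ≤ t → HasDerivAt x (Phi vmax alo ahi (x t) (b t) (w t)) t)
    (hy : ∀ t, 0 ≤ t → HasDerivAt y (Phi vmax alo ahi (y t) (c t) (w t)) t)
    (h0 : y 0 ≤ x 0) :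
    ∀ t, 0 ≤ t → y t ≤ x t := by
  intro t ht
  by_contra hcon
  push_neg at hcon
  set d : ℝ → ℝ := fun s => x s - y s with hd
  have hdt : d t < 0 := by simp [hd]; linarith
  have hd0 : 0 ≤ d 0 := by simp [hd]; linarith
  have ht0 : t ≠ 0 := by
    intro h; rw [h] at hdt; linarith
  have htpos : 0 < t := lt_of_le_of_ne ht (Ne.symm ht0)
  -- derivative of d
  have hdderiv : ∀ s, 0 ≤ s → HasDerivAt d
      (Phi vmax alo ahi (x s) (b s) (w s) - Phi vmax alo ahi (y s) (c s) (w s)) s := by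
    intro s hs
    exact (hx s hs).sub (hy s hs)
  have hdcont : ∀ s, 0 ≤ s → ContinuousAt d s := by
    intro s hs
    exact (hdderiv s hs).continuousAt
  -- the set of times in [0,t] where d is nonnegative
  set S : Set ℝ := {s | s ∈ Set.Icc 0 t ∧ 0 ≤ d s} with hS
  have hS0 : (0:ℝ) ∈ S := ⟨⟨le_refl _, le_of_lt htpos⟩, hd0⟩
  have hSne : S.Nonempty := ⟨0, hS0⟩
  have hSbdd : BddAbove S := ⟨t, fun s hs => hs.1.2⟩
  set t0 := sSup S with ht0def
  have ht00 : 0 ≤ t0 := le_csSup hSbdd hS0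
  have ht0t : t0 ≤ t := csSup_le hSne (fun s hs => hs.1.2)
  -- d t0 ≥ 0 via continuity and closure
  have ht0cl : t0 ∈ closure S := csSup_mem_closure hSne hSbdd
  have hdt0 : 0 ≤ d t0 := by
    have hcw : ContinuousWithinAt d S t0 := (hdcont t0 ht00).continuousWithinAt
    have := hcw.mem_closure_image ht0cl
    have hsub : d '' S ⊆ Set.Ici 0 := by
      rintro _ ⟨s, hs, rfl⟩; exact hs.2
    have : d t0 ∈ closure (Set.Ici (0:ℝ)) := closure_mono hsub this
    rwa [isClosed_Ici.closure_eq] at this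
  have ht0lt : t0 < t := by
    rcases lt_or_eq_of_le ht0t with h | h
    · exact h
    · exfalso; rw [h] at hdt0; linarith
  -- on (t0, t], d is negative
  have hneg : ∀ s, t0 < s → s ≤ t → d s < 0 := by
    intro s hs1 hs2
    by_contra hge
    push_neg at hge
    have : s ∈ S := ⟨⟨le_trans ht00 (le_of_lt hs1), hs2⟩, hge⟩
    exact absurd (le_csSup hSbdd this) (not_le.mpr hs1)
  -- d is monotone on [s, t] for any s ∈ (t0, t]
  have hmonoD : ∀ s, t0 < s → s ≤ t → d s ≤ d t := by
    intro s hs1 hs2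
    have hsnn : 0 ≤ s := le_trans ht00 (le_of_lt hs1)
    have hmon : MonotoneOn d (Set.Icc s t) := by
      apply monotoneOn_of_deriv_nonneg (convex_Icc s t)
      · intro u hu
        exact (hdcont u (le_trans hsnn hu.1)).continuousWithinAt
      · intro u hu
        rw [interior_Icc] at hu
        exact (hdderiv u (le_trans hsnn (le_of_lt hu.1))).differentiableAt.differentiableWithinAt
      · intro u hu
        rw [interior_Icc] at hu
        have hunn : 0 ≤ u := le_trans hsnn (le_of_lt hu.1)
        rw [(hdderiv u hunn).deriv]
        have hdu : d u < 0 := hneg u (lt_trans hs1 hu.1) (le_of_lt hu.2)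
        have hxy : x u ≤ y u := by simp [hd] at hdu; linarith
        have := Phi_le vmax alo ahi (hw u hunn).1 (hw u hunn).2 hxy (hbc u hunn)
        linarith
    exact hmon ⟨le_refl _, hs2⟩ ⟨hs2, le_refl _⟩ hs2
  -- limit as s → t0⁺
  have htend : Filter.Tendsto d (nhdsWithin t0 (Set.Ioi t0)) (nhds (d t0)) :=
    (hdcont t0 ht00).continuousWithinAt.tendsto
  have hev : ∀ᶠ s in nhdsWithin t0 (Set.Ioi t0), d s ≤ d t := by
    filter_upwards [Ioc_mem_nhdsGT_of_mem ⟨le_refl t0, ht0lt⟩] with s hs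
    exact hmonoD s hs.1 hs.2
  have : d t0 ≤ d t := le_of_tendsto htend hev
  linarith

/-- **Bounds of Reachable Position** (paper's Corollary 1): for a
non-increasing input `a`, the `Δ`-shifted input `t ↦ a (t + Δ)` and the
zero-order-hold input `t ↦ a (Δ·⌊t/Δ⌋)` bracket the input pointwise, and
consequently the corresponding travelled distances bracket the true
travelled distance. -/
theorem reachable_position_bounds
    (vmax alo ahi Δ : ℝ) (hvmax : 0 < vmax) (hlim : alo ≤ ahi) (hΔ : 0 < Δ)
    (w : ℝ → ℝ)
    (hw : ∀ t, 0 ≤ t → alo + w t ≤ 0 ∧ 0 ≤ ahi + w t)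
    (a : ℝ → ℝ)
    (hmono : ∀ t1 t2, 0 ≤ t1 → t1 ≤ t2 → a t2 ≤ a t1)
    (vlo v vhi : ℝ → ℝ)
    (hvlo : ∀ t, 0 ≤ t →
      HasDerivAt vlo (Phi vmax alo ahi (vlo t) (a (t + Δ)) (w t)) t)
    (hv : ∀ t, 0 ≤ t →
      HasDerivAt v (Phi vmax alo ahi (v t) (a t) (w t)) t)
    (hvhi : ∀ t, 0 ≤ t →
      HasDerivAt vhi (Phi vmax alo ahi (vhi t) (a (Δ * (⌊t / Δ⌋ : ℤ))) (w t)) t)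
    (hinit1 : vlo 0 = v 0) (hinit2 : v 0 = vhi 0) :
    (∀ t, 0 ≤ t → a (t + Δ) ≤ a t ∧ a t ≤ a (Δ * (⌊t / Δ⌋ : ℤ))) ∧
    (∀ t, 0 ≤ t →
      (∫ τ in (0:ℝ)..t, vlo τ) ≤ (∫ τ in (0:ℝ)..t, v τ) ∧
      (∫ τ in (0:ℝ)..t, v τ) ≤ ∫ τ in (0:ℝ)..t, vhi τ) := by
  -- part (i): bracketing of the input
  have hfloor : ∀ t : ℝ, 0 ≤ t →
      0 ≤ Δ * (⌊t / Δ⌋ : ℤ) ∧ Δ * (⌊t / Δ⌋ : ℤ) ≤ t := by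
    intro t ht
    have h1 : (0:ℤ) ≤ ⌊t / Δ⌋ := by
      apply Int.floor_nonneg.mpr
      positivity
    have h2 : (⌊t / Δ⌋ : ℝ) ≤ t / Δ := Int.floor_le _
    constructor
    · have : (0:ℝ) ≤ (⌊t / Δ⌋ : ℤ) := by exact_mod_cast h1
      positivity
    · calc Δ * (⌊t / Δ⌋ : ℤ) ≤ Δ * (t / Δ) := by
            apply mul_le_mul_of_nonneg_left h2 (le_of_lt hΔ)
        _ = t := by field_simp
  have hinput : ∀ t, 0 ≤ t → a (t + Δ) ≤ a t ∧ a t ≤ a (Δ * (⌊t / Δ⌋ : ℤ)) := by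
    intro t ht
    refine ⟨hmono t (t + Δ) ht (by linarith), ?_⟩
    exact hmono (Δ * (⌊t / Δ⌋ : ℤ)) t (hfloor t ht).1 (hfloor t ht).2
  refine ⟨hinput, ?_⟩
  -- part (ii): velocity ordering
  have hlo : ∀ t, 0 ≤ t → vlo t ≤ v t := by
    apply sol_le vmax alo ahi w a (fun t => a (t + Δ)) v vlo hw
      (fun t ht => (hinput t ht).1) hv hvlo (le_of_eq hinit1)
  have hhi : ∀ t, 0 ≤ t → v t ≤ vhi t := by
    apply sol_le vmax alo ahi w (fun t => a (Δ * (⌊t / Δ⌋ : ℤ))) a vhi v hw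
      (fun t ht => (hinput t ht).2) hvhi hv (le_of_eq hinit2)
  -- integrate
  intro t ht
  have hcont : ∀ (f : ℝ → ℝ), (∀ s, 0 ≤ s → ContinuousAt f s) →
      IntervalIntegrable f MeasureTheory.volume 0 t := by
    intro f hf
    apply ContinuousOn.intervalIntegrable
    rw [Set.uIcc_of_le ht]
    exact fun s hs => (hf s hs.1).continuousWithinAt
  have hintlo := hcont vlo (fun s hs => (hvlo s hs).continuousAt)
  have hintv := hcont v (fun s hs => (hv s hs).continuousAt)
  have hinthi := hcont vhi (fun s hs => (hvhi s hs).continuousAt)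
  constructor
  · exact intervalIntegral.integral_mono_on ht hintlo hintv
      (fun s hs => hlo s hs.1)
  · exact intervalIntegral.integral_mono_on ht hintv hinthi
      (fun s hs => hhi s hs.1)
end

section
/- Fix v_max > 0. Let a_lo1 ≤ a_hi1 and a_lo2 ≤ a_hi2 with a_lo1 ≤ a_lo2 and a_hi1 ≤ a_hi2. Let a1, a2, w1, w2 : [0,∞) → ℝ satisfy, for all t ≥ 0: a1(t) ≤ a2(t), w1(t) ≤ w2(t), a_lo1 + w1(t) ≤ 0, and a_hi2 + w2(t) ≥ 0. Let v1, v2 : [0,∞) → ℝ be differentiable with v1'(t) = Φ(v1(t), a1(t), w1(t); a_lo1, a_hi1) and v2'(t) = Φ(v2(t), a2(t), w2(t); a_lo2, a_hi2) for all t, and v1(0) ≤ v2(0). Then v1(t) ≤ v2(t) for all t ≥ 0. -/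
lemma Phi_le_s3 {vmax alo1 ahi1 alo2 ahi2 v1 v2 a1 a2 w1 w2 : ℝ}
    (h1 : alo1 ≤ ahi1) (h2 : alo2 ≤ ahi2)
    (hlo : alo1 ≤ alo2) (hhi : ahi1 ≤ ahi2)
    (ha : a1 ≤ a2) (hw : w1 ≤ w2)
    (hbrake : alo1 + w1 ≤ 0) (hengine : 0 ≤ ahi2 + w2)
    (hv : v2 ≤ v1) :
    Phi vmax alo1 ahi1 v1 a1 w1 ≤ Phi vmax alo2 ahi2 v2 a2 w2 := by
  have key : max alo1 (min ahi1 a1) + w1 ≤ max alo2 (min ahi2 a2) + w2 :=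
    add_le_add (max_le_max hlo (min_le_min hhi ha)) hw
  have neg1 : a1 + w1 ≤ 0 → max alo1 (min ahi1 a1) + w1 ≤ 0 := by
    intro h
    rcases le_total a1 alo1 with hc | hc
    · have : min ahi1 a1 = a1 := min_eq_right (hc.trans h1)
      rw [this, max_eq_left hc]; exact hbrake
    · have : max alo1 (min ahi1 a1) ≤ a1 := max_le hc (min_le_right _ _)
      linarith
  have pos2 : 0 ≤ a2 + w2 → 0 ≤ max alo2 (min ahi2 a2) + w2 := by
    intro h
    rcases le_total a2 ahi2 with hc | hc
    · have : a2 ≤ max alo2 (min ahi2 a2) := le_max_of_le_right (le_min hc le_rfl)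
      linarith
    · have : ahi2 ≤ max alo2 (min ahi2 a2) := le_max_of_le_right (le_min le_rfl hc)
      linarith
  unfold Phi
  split_ifs with hA hB hB
  · exact le_rfl
  · push_neg at hB
    rcases hA with ⟨hv1, hA⟩ | ⟨hvm, hA⟩
    · exact pos2 (hB.1 (hv.trans hv1)).le
    · exact pos2 (by linarith)
  · push_neg at hA
    rcases hB with ⟨hv2, hB⟩ | ⟨hvm, hB⟩
    · exact neg1 (by linarith)
    · exact neg1 (hA.2 (hvm.trans hv)).le
  · exact key

/-- **Velocity comparison theorem**: pointwise ordered inputs, disturbances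
and acceleration limits yield pointwise ordered velocities (instantiation of
the paper's Theorem 1 for position-independent limits). -/
theorem velocity_comparison
    (vmax : ℝ) (hvmax : 0 < vmax)
    (alo1 ahi1 alo2 ahi2 : ℝ)
    (h1 : alo1 ≤ ahi1) (h2 : alo2 ≤ ahi2)
    (hlo : alo1 ≤ alo2) (hhi : ahi1 ≤ ahi2)
    (a1 a2 w1 w2 : ℝ → ℝ)
    (ha : ∀ t, 0 ≤ t → a1 t ≤ a2 t)
    (hw : ∀ t, 0 ≤ t → w1 t ≤ w2 t)
    (hbrake : ∀ t, 0 ≤ t → alo1 + w1 t ≤ 0)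
    (hengine : ∀ t, 0 ≤ t → 0 ≤ ahi2 + w2 t)
    (v1 v2 : ℝ → ℝ)
    (hv1 : ∀ t, 0 ≤ t → HasDerivAt v1 (Phi vmax alo1 ahi1 (v1 t) (a1 t) (w1 t)) t)
    (hv2 : ∀ t, 0 ≤ t → HasDerivAt v2 (Phi vmax alo2 ahi2 (v2 t) (a2 t) (w2 t)) t)
    (hinit : v1 0 ≤ v2 0) :
    ∀ t, 0 ≤ t → v1 t ≤ v2 t := by
  set g : ℝ → ℝ := fun t => v1 t - v2 t with hg
  have hg' : ∀ t, 0 ≤ t → HasDerivAt g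
      (Phi vmax alo1 ahi1 (v1 t) (a1 t) (w1 t) - Phi vmax alo2 ahi2 (v2 t) (a2 t) (w2 t)) t :=
    fun t ht => (hv1 t ht).sub (hv2 t ht)
  intro t ht
  by_contra hcon
  push_neg at hcon
  have hgt : 0 < g t := by simp [hg]; linarith
  have hg0 : g 0 ≤ 0 := by simp [hg]; linarith
  -- the set of points in [0, t] where g ≤ 0
  set S : Set ℝ := {s | s ∈ Set.Icc 0 t ∧ g s ≤ 0} with hS
  have hcont : ContinuousOn g (Set.Icc 0 t) := fun x hx =>
    ((hg' x hx.1).continuousAt).continuousWithinAt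
  have hScl : IsClosed S :=
    hcont.preimage_isClosed_of_isClosed isClosed_Icc isClosed_Iic
  have hSne : S.Nonempty := ⟨0, ⟨le_rfl, ht⟩, hg0⟩
  have hSbdd : BddAbove S := ⟨t, fun x hx => hx.1.2⟩
  set s := sSup S with hs
  have hsS : s ∈ S := hScl.csSup_mem hSne hSbdd
  have hs0 : 0 ≤ s := hsS.1.1
  have hst : s ≤ t := hsS.1.2
  have hgs : g s ≤ 0 := hsS.2
  -- g > 0 on (s, t]
  have hpos : ∀ x, s < x → x ≤ t → 0 < g x := by
    intro x hsx hxt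
    by_contra hcx
    push_neg at hcx
    exact absurd (le_csSup hSbdd (⟨⟨hs0.trans hsx.le, hxt⟩, hcx⟩ : x ∈ S)) (not_le.mpr hsx)
  -- g is antitone on [s, t]
  have hanti : AntitoneOn g (Set.Icc s t) := by
    apply antitoneOn_of_deriv_nonpos (convex_Icc s t)
    · intro x hx
      exact ((hg' x (hs0.trans hx.1)).continuousAt).continuousWithinAt
    · intro x hx
      rw [interior_Icc] at hx
      exact ((hg' x (hs0.trans hx.1.le)).differentiableAt).differentiableWithinAt
    · intro x hx
      rw [interior_Icc] at hx
      have hx0 : 0 ≤ x := hs0.trans hx.1.le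
      have hd := hg' x hx0
      rw [hd.deriv]
      have hle : v2 x ≤ v1 x := by
        have := hpos x hx.1 hx.2.le
        simp [hg] at this; linarith
      have := Phi_le_s3 (vmax := vmax) h1 h2 hlo hhi (ha x hx0) (hw x hx0)
        (hbrake x hx0) (hengine x hx0) hle
      linarith
  have := hanti ⟨le_rfl, hst⟩ ⟨hst, le_rfl⟩ hst
  linarith
end

section
/- Under the hypotheses of the velocity comparison theorem (v1, v2 differentiable solving v_i' = Φ(v_i, a_i(t), w_i(t); a_lo_i, a_hi_i) with a1 ≤ a2, w1 ≤ w2 pointwise, a_lo1 ≤ a_lo2, a_hi1 ≤ a_hi2, a_lo_i ≤ a_hi_i, a_lo1 + w1(t) ≤ 0 ≤ a_hi2 + w2(t) for all t, and v1(0) ≤ v2(0)), let s1(t) = σ1 + ∫₀ᵗ v1 and s2(t) = σ2 + ∫₀ᵗ v2 with σ1 ≤ σ2. Then s1(t) ≤ s2(t) for all t ≥ 0. -/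
/-- Key quasi-monotonicity: for `u ≥ v`, the saturated acceleration of
vehicle 1 at velocity `u` is at most that of vehicle 2 at velocity `v`. -/
lemma Phi_quasi_mono (vmax alo1 ahi1 alo2 ahi2 a1 a2 w1 w2 u v : ℝ)
    (hlo : alo1 ≤ alo2) (hhi : ahi1 ≤ ahi2)
    (ha : a1 ≤ a2) (hw : w1 ≤ w2)
    (hbrake : alo1 + w1 ≤ 0) (hengine : 0 ≤ ahi2 + w2) (huv : v ≤ u) :
    Phi vmax alo1 ahi1 u a1 w1 ≤ Phi vmax alo2 ahi2 v a2 w2 := by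
  have hmin1 : min ahi1 a1 ≤ a1 := min_le_right _ _
  unfold Phi
  split_ifs with hb1 hb2 hb2
  · exact le_refl 0
  · -- Phi1 = 0, Phi2 = clamp2 + w2 : need 0 ≤ clamp2 + w2
    have haw2 : 0 ≤ a2 + w2 := by
      rcases hb1 with ⟨hu, h1⟩ | ⟨hu, h1⟩
      · by_contra hneg
        exact hb2 (Or.inl ⟨le_trans huv hu, by linarith⟩)
      · linarith
    have : -w2 ≤ min ahi2 a2 := le_min (by linarith) (by linarith)
    have : -w2 ≤ max alo2 (min ahi2 a2) := le_trans this (le_max_right _ _)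
    linarith
  · -- Phi1 = clamp1 + w1, Phi2 = 0 : need clamp1 + w1 ≤ 0
    have haw1 : a1 + w1 ≤ 0 := by
      rcases hb2 with ⟨hv, h2⟩ | ⟨hv, h2⟩
      · linarith
      · by_contra hpos
        exact hb1 (Or.inr ⟨le_trans hv huv, by linarith⟩)
    have : max alo1 (min ahi1 a1) ≤ -w1 := max_le (by linarith) (by linarith)
    linarith
  · have : max alo1 (min ahi1 a1) ≤ max alo2 (min ahi2 a2) :=
      max_le_max hlo (min_le_min hhi ha)
    linarith

/-- **Position ordering** (position-ordering conclusion of the paper's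
Theorem 1 for position-independent limits): under the hypotheses of the
velocity comparison theorem and with ordered initial positions
`σ1 ≤ σ2`, the positions `s_i(t) = σ_i + ∫₀ᵗ v_i` stay ordered. -/
theorem position_comparison
    (vmax : ℝ) (hvmax : 0 < vmax)
    (alo1 ahi1 alo2 ahi2 : ℝ)
    (h1 : alo1 ≤ ahi1) (h2 : alo2 ≤ ahi2)
    (hlo : alo1 ≤ alo2) (hhi : ahi1 ≤ ahi2)
    (a1 a2 w1 w2 : ℝ → ℝ)
    (ha : ∀ t, 0 ≤ t → a1 t ≤ a2 t)
    (hw : ∀ t, 0 ≤ t → w1 t ≤ w2 t)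
    (hbrake : ∀ t, 0 ≤ t → alo1 + w1 t ≤ 0)
    (hengine : ∀ t, 0 ≤ t → 0 ≤ ahi2 + w2 t)
    (v1 v2 : ℝ → ℝ)
    (hv1 : ∀ t, 0 ≤ t → HasDerivAt v1 (Phi vmax alo1 ahi1 (v1 t) (a1 t) (w1 t)) t)
    (hv2 : ∀ t, 0 ≤ t → HasDerivAt v2 (Phi vmax alo2 ahi2 (v2 t) (a2 t) (w2 t)) t)
    (hinitv : v1 0 ≤ v2 0)
    (σ1 σ2 : ℝ) (hinits : σ1 ≤ σ2) :
    ∀ t, 0 ≤ t →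
      σ1 + ∫ τ in (0:ℝ)..t, v1 τ ≤ σ2 + ∫ τ in (0:ℝ)..t, v2 τ := by
  -- velocity comparison
  have hvel : ∀ t, 0 ≤ t → v1 t ≤ v2 t := by
    intro T hT
    -- enough: v1 T ≤ v2 T + ε (T + 1) for all ε > 0
    have hEps : ∀ ε : ℝ, 0 < ε → v1 T ≤ v2 T + ε * (T + 1) := by
      intro ε hε
      have hc1 : ContinuousOn v1 (Set.Icc 0 T) := fun x hx =>
        ((hv1 x hx.1).continuousAt).continuousWithinAt
      have hc2 : ContinuousOn (fun t => v2 t + ε * (t + 1)) (Set.Icc 0 T) := by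
        apply ContinuousOn.add
        · exact fun x hx => ((hv2 x hx.1).continuousAt).continuousWithinAt
        · exact (continuous_const.mul (continuous_id.add continuous_const)).continuousOn
      have key := image_le_of_deriv_right_lt_deriv_boundary'
        (f := v1) (f' := fun t => Phi vmax alo1 ahi1 (v1 t) (a1 t) (w1 t))
        (a := 0) (b := T)
        hc1
        (fun x hx => ((hv1 x hx.1).hasDerivWithinAt))
        (B := fun t => v2 t + ε * (t + 1))
        (B' := fun t => Phi vmax alo2 ahi2 (v2 t) (a2 t) (w2 t) + ε)
        (by simpa using by nlinarith [hε])
        hc2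
        (fun x hx => by
          have h2' := (hv2 x hx.1).hasDerivWithinAt (s := Set.Ici x)
          have hlin : HasDerivWithinAt (fun t : ℝ => ε * (t + 1)) ε (Set.Ici x) x := by
            simpa using (((hasDerivAt_id x).add_const 1).const_mul ε).hasDerivWithinAt
          exact h2'.add hlin)
        (fun x hx hfB => by
          have hx0 : (0:ℝ) ≤ x := hx.1
          have hεx : 0 ≤ ε * (x + 1) := by positivity
          have huv : v2 x ≤ v1 x := by linarith
          have := Phi_quasi_mono vmax alo1 ahi1 alo2 ahi2 (a1 x) (a2 x) (w1 x) (w2 x)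
            (v1 x) (v2 x) hlo hhi (ha x hx0) (hw x hx0) (hbrake x hx0) (hengine x hx0) huv
          linarith)
      exact key (Set.right_mem_Icc.2 hT)
    by_contra hlt
    push_neg at hlt
    have hT1 : 0 < T + 1 := by linarith
    have hsub : 0 < v1 T - v2 T := by linarith
    have hε : 0 < (v1 T - v2 T) / (2 * (T + 1)) := div_pos hsub (by linarith)
    have := hEps _ hε
    have : v1 T ≤ v2 T + (v1 T - v2 T) / 2 := by
      have : (v1 T - v2 T) / (2 * (T + 1)) * (T + 1) = (v1 T - v2 T) / 2 := by
        field_simp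
      linarith [hEps _ hε, this.symm ▸ hEps _ hε]
    linarith
  intro t ht
  have hi1 : IntervalIntegrable v1 MeasureTheory.volume 0 t := by
    apply ContinuousOn.intervalIntegrable
    rw [Set.uIcc_of_le ht]
    exact fun x hx => ((hv1 x hx.1).continuousAt).continuousWithinAt
  have hi2 : IntervalIntegrable v2 MeasureTheory.volume 0 t := by
    apply ContinuousOn.intervalIntegrable
    rw [Set.uIcc_of_le ht]
    exact fun x hx => ((hv2 x hx.1).continuousAt).continuousWithinAt
  have := intervalIntegral.integral_mono_on ht hi1 hi2 (fun x hx => hvel x hx.1)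
  linarith
end

section
/- Consider states σ = (A, C) with A : ℝ (the braking limit) and C : Option ℝ (the braking limit candidate), and the step relation Step σ σ' holding iff one of: (a) σ' = σ; (b) there exists c < A with σ' = (A, some c); (c) there exists a' ≥ A with σ' = (a', none); (d) C = some c and there exists c_f ≤ A such that, setting A' = max(c_f, c), σ' = (A', none) if A' = c and σ' = (A', some c) otherwise. Then the predicate P(A, C) := (for all c, C = some c implies c ≤ A) is an inductive invariant: if P(σ) and Step σ σ', then P(σ'). Consequently P holds in every state reachable from an initial state with C = none. -/
/-- Step relation of the abstract braking-limit protocol (paper's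
Algorithm 4): a state is a pair `(A, C)` of the current braking limit `A`
and the optional unconfirmed candidate `C`.
(a) stutter; (b) set a new, stronger candidate (line 6); (c) adopt a weaker
verified braking limit, deleting the candidate (lines 8 and 11); (d) adopt
the maximum of a follower-confirmed value `c_f ≤ A` and the candidate `c`
(lines 23–25), deleting the candidate exactly if it was adopted. -/
def Step (σ σ' : ℝ × Option ℝ) : Prop :=
  σ' = σ ∨
  (∃ c : ℝ, c < σ.1 ∧ σ' = (σ.1, some c)) ∨
  (∃ a' : ℝ, σ.1 ≤ a' ∧ σ' = (a', none)) ∨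
  (∃ c cf : ℝ, σ.2 = some c ∧ cf ≤ σ.1 ∧
    σ' = (max cf c, if max cf c = c then none else some c))

/-- The candidate invariant: the candidate, when present, never exceeds the
current braking limit. -/
def CandInv (σ : ℝ × Option ℝ) : Prop :=
  ∀ c : ℝ, σ.2 = some c → c ≤ σ.1

/-- **Candidate is not greater than braking limit** (paper's Lemma 1):
`CandInv` is an inductive invariant of `Step`, hence holds in every state
reachable from an initial state without a candidate. -/
theorem candidate_invariant :
    (∀ σ σ' : ℝ × Option ℝ, CandInv σ → Step σ σ' → CandInv σ') ∧
    (∀ σ0 σ : ℝ × Option ℝ, σ0.2 = none →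
      Relation.ReflTransGen Step σ0 σ → CandInv σ) := by
  have ind : ∀ σ σ' : ℝ × Option ℝ, CandInv σ → Step σ σ' → CandInv σ' := by
    rintro ⟨A, C⟩ σ' h (rfl | ⟨c, hc, rfl⟩ | ⟨a', ha, rfl⟩ | ⟨c, cf, hC, hcf, rfl⟩)
    · exact h
    · intro x hx; simp at hx; subst hx; exact hc.le
    · intro x hx; simp at hx
    · intro x hx
      by_cases hm : max cf c = c <;> simp [hm] at hx
      subst hx; simp [hm, le_max_right]
  refine ⟨ind, fun σ0 σ h0 hr => ?_⟩
  induction hr with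
  | refl => intro x hx; rw [h0] at hx; simp at hx
  | tail _ hstep ih => exact ind _ _ ih hstep
end

section
/- Let A : ℕ → ℝ, C : ℕ → Option ℝ, and T : ℕ → ℕ be sequences satisfying: (i) for all k and c, C k = some c implies c ≤ A k; (ii) T is monotone non-decreasing and T k ≤ k for all k; (iii) if A (k+1) > A k then T (k+1) > k; (iv) if C k ≠ none and C (k+1) = none then T (k+1) > k; (v) if C k = some c and C (k+1) = some c' with c' > c then T (k+1) > k. Define S k = c if C k = some c, and S k = A k otherwise. Then for all k0 < k1 with S k0 < S k1, it holds that T k1 > k0. -/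
/-- **Increasing sent braking limit gives time reset** (abstraction of the
paper's Lemma 3 for Algorithm 4).  At each step `k` the vehicle stores a
braking limit `A k`, an optional candidate `C k` and an acceptance-time
threshold `T k`; the value it sends is the candidate if present, otherwise
the braking limit, i.e. `(C k).getD (A k)`.  If the sent value strictly
increases between steps `k0 < k1`, then `T k1 > k0`. -/
theorem time_reset
    (A : ℕ → ℝ) (C : ℕ → Option ℝ) (T : ℕ → ℕ)
    (hInv : ∀ k c, C k = some c → c ≤ A k)
    (hTmono : Monotone T) (hTle : ∀ k, T k ≤ k)
    (hAinc : ∀ k, A k < A (k + 1) → k < T (k + 1))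
    (hCdel : ∀ k, C k ≠ none → C (k + 1) = none → k < T (k + 1))
    (hCinc : ∀ k c c', C k = some c → C (k + 1) = some c' → c < c' →
      k < T (k + 1)) :
    ∀ k0 k1, k0 < k1 → (C k0).getD (A k0) < (C k1).getD (A k1) →
      k0 < T k1 := by
  intro k0 k1 hlt hS
  by_contra h
  push_neg at h
  have step : ∀ k, k0 ≤ k → k + 1 ≤ k1 →
      (C (k+1)).getD (A (k+1)) ≤ (C k).getD (A k) := by
    intro k hk hk1
    have hT : ¬ k < T (k+1) := by
      have := hTmono hk1
      omega
    have hA : A (k+1) ≤ A k := le_of_not_gt (fun h' => hT (hAinc k h'))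
    cases hc : C k with
    | none =>
      cases hc' : C (k+1) with
      | none => simpa [hc, hc'] using hA
      | some c' =>
        have := hInv (k+1) c' hc'
        simp only [hc, hc', Option.getD_some, Option.getD_none]
        linarith
    | some c =>
      cases hc' : C (k+1) with
      | none => exact absurd (hCdel k (by simp [hc]) hc') hT
      | some c' =>
        have : ¬ c < c' := fun h' => hT (hCinc k c c' hc hc' h')
        simp only [hc, hc', Option.getD_some]
        linarith
  have main : ∀ n, k0 + n ≤ k1 →
      (C (k0+n)).getD (A (k0+n)) ≤ (C k0).getD (A k0) := by
    intro n
    induction n with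
    | zero => simp
    | succ m ih =>
      intro hle
      have h2 : k0 + m ≤ k1 := by omega
      have := step (k0 + m) (by omega) (by omega)
      calc (C (k0 + (m+1))).getD (A (k0 + (m+1)))
          = (C (k0 + m + 1)).getD (A (k0 + m + 1)) := by ring_nf
        _ ≤ (C (k0 + m)).getD (A (k0 + m)) := this
        _ ≤ (C k0).getD (A k0) := ih h2
  have hfin := main (k1 - k0) (by omega)
  rw [show k0 + (k1 - k0) = k1 by omega] at hfin
  linarith
end

section
/- Consider a leader–follower system with global time steps k ∈ ℕ and state (A k : ℝ, C k : Option ℝ, T k : ℕ, b k : ℝ, ρ k : ℕ), where A is the leader's braking limit, C its candidate, T its acceptance-time threshold, b the follower's stored braking limit for the leader, and ρ the send-timestamp of the message the follower's stored value came from. Define S k = c if C k = some c and S k = A k otherwise. Assume: (I) for all k and c, C k = some c implies c ≤ A k; (II) T is non-decreasing with T k ≤ k; (III) if A(k+1) > A k then C(k+1) = none and T(k+1) = k+1; (IV) if C k ≠ none and C(k+1) = none then T(k+1) = k+1; (V) if C k = some c and C(k+1) = some c' with c' > c then T(k+1) = k+1; (VI) if A(k+1) < A k then there exist c with C k = some c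 and a step m ≤ k such that b m ≤ A k, ρ m ≥ T k, and A(k+1) = max(b m, c); (VII) at each step either (b, ρ) is unchanged, i.e. (b(k+1), ρ(k+1)) = (b k, ρ k) and then also one leader transition occurs, or the leader state is unchanged and there exists j with ρ k < j ≤ k+1, b(k+1) = S j, and ρ(k+1) = j; (VIII) initially C 0 = none, T 0 = 0, ρ 0 = 0 and b 0 = A 0. Then for every k: b k ≤ A k. -/
/-- The value the leader sends at step `k`: the candidate if present,
otherwise its braking limit. -/
noncomputable def sentValue (A : ℕ → ℝ) (C : ℕ → Option ℝ) (k : ℕ) : ℝ :=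
  (C k).getD (A k)

/-- **Braking Limit Invariance** (paper's Theorem 2) for a leader–follower
pair with unreliable, arbitrarily delayed communication.  The leader's state
is `(A k, C k, T k)` (braking limit, candidate, acceptance-time threshold)
and the follower's state is `(b k, ρ k)` (stored braking limit for the
leader and the send-timestamp of the message it came from).  Under the
protocol rules (I)–(VIII), the braking limit the follower assumes for the
leader never exceeds the leader's actual braking limit: `b k ≤ A k`. -/
theorem braking_limit_invariance
    (A : ℕ → ℝ) (C : ℕ → Option ℝ) (T : ℕ → ℕ) (b : ℕ → ℝ) (ρ : ℕ → ℕ)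
    -- (I) candidate invariant
    (hI : ∀ k c, C k = some c → c ≤ A k)
    -- (II) threshold is non-decreasing and never in the future
    (hII : Monotone T) (hII' : ∀ k, T k ≤ k)
    -- (III) braking-limit increase deletes the candidate and resets T
    (hIII : ∀ k, A k < A (k + 1) → C (k + 1) = none ∧ T (k + 1) = k + 1)
    -- (IV) candidate deletion resets T
    (hIV : ∀ k, C k ≠ none → C (k + 1) = none → T (k + 1) = k + 1)
    -- (V) candidate increase resets T
    (hV : ∀ k c c', C k = some c → C (k + 1) = some c' → c < c' →
      T (k + 1) = k + 1)
    -- (VI) a braking-limit decrease is a confirmed adoption of the candidate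
    (hVI : ∀ k, A (k + 1) < A k → ∃ c, C k = some c ∧ ∃ m ≤ k,
      b m ≤ A k ∧ T k ≤ ρ m ∧ A (k + 1) = max (b m) c)
    -- (VII) either the follower state is unchanged, or the leader state is
    -- unchanged and the follower accepts a strictly newer message `(S j, j)`
    (hVII : ∀ k,
      (b (k + 1) = b k ∧ ρ (k + 1) = ρ k) ∨
      (A (k + 1) = A k ∧ C (k + 1) = C k ∧ T (k + 1) = T k ∧
        ∃ j, ρ k < j ∧ j ≤ k + 1 ∧ b (k + 1) = sentValue A C j ∧
          ρ (k + 1) = j))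
    -- (VIII) initial conditions
    (hC0 : C 0 = none) (hT0 : T 0 = 0) (hρ0 : ρ 0 = 0) (hb0 : b 0 = A 0) :
    ∀ k, b k ≤ A k := by

  -- sent value is always bounded by the current braking limit
  have hS : ∀ k, sentValue A C k ≤ A k := by
    intro k
    cases h : C k with
    | none => simp [sentValue, h]
    | some c => simpa [sentValue, h] using hI k c h
  -- ρ is non-decreasing and ρ k ≤ k
  have hρmono : Monotone ρ := by
    apply monotone_nat_of_le_succ
    intro k
    rcases hVII k with ⟨_, h⟩ | ⟨_, _, _, j, hj1, _, _, hj4⟩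
    · omega
    · omega
  have hρle : ∀ k, ρ k ≤ k := by
    intro k
    induction k with
    | zero => omega
    | succ k ih =>
      rcases hVII k with ⟨_, h⟩ | ⟨_, _, _, j, hj1, hj2, _, hj4⟩
      · omega
      · omega
  -- no reset at step j implies A and S do not increase
  have stepA : ∀ j, T (j + 1) ≤ j → A (j + 1) ≤ A j := by
    intro j hT
    by_contra h
    push_neg at h
    have := (hIII j h).2
    omega
  have stepS : ∀ j, T (j + 1) ≤ j →
      sentValue A C (j + 1) ≤ sentValue A C j := by
    intro j hT
    have hA1 : A (j + 1) ≤ A j := stepA j hT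
    cases h1 : C (j + 1) with
    | none =>
      have h0 : C j = none := by
        by_contra h
        have := hIV j h h1
        omega
      simpa [sentValue, h0, h1] using hA1
    | some c' =>
      cases h0 : C j with
      | none =>
        simpa [sentValue, h0, h1] using le_trans (hI _ _ h1) hA1
      | some c =>
        have hcc : c' ≤ c := by
          by_contra h
          push_neg at h
          have := hV j c c' h0 h1 h
          omega
        simpa [sentValue, h0, h1] using hcc
  -- on an interval with no reset, S is non-increasing
  have lemB : ∀ k i, T k ≤ i → ∀ j, i ≤ j → j ≤ k →
      sentValue A C j ≤ sentValue A C i := by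
    intro k i hTi j hij
    induction j, hij using Nat.le_induction with
    | base => intro _; exact le_rfl
    | succ n hn ihn =>
      intro hnk
      have hTn : T (n + 1) ≤ n := by
        have := hII (show n + 1 ≤ k by omega)
        omega
      exact le_trans (stepS n hTn) (ihn (by omega))
  -- main strengthened invariant
  have main : ∀ k, b k = sentValue A C (ρ k) ∧
      (∀ j, ρ k < j → j ≤ k → sentValue A C j ≤ A k) ∧ b k ≤ A k := by
    intro k
    induction k using Nat.strong_induction_on with
    | _ k ih =>
      match k with
      | 0 =>
        refine ⟨by simp [hρ0, hb0, sentValue, hC0], ?_, by rw [hb0]⟩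
        intro j h1 h2
        omega
      | k + 1 =>
        obtain ⟨ihb, ihmsg, ihba⟩ := ih k (lt_add_one k)
        rcases hVII k with ⟨hbk, hρk⟩ | ⟨hA, hC, hT, j, hj1, hj2, hj3, hj4⟩
        · -- leader transition, follower unchanged
          rcases lt_trichotomy (A (k + 1)) (A k) with hlt | heq | hgt
          · -- confirmed decrease
            obtain ⟨c, hc, m, hm, hbm, hρm, hAk1⟩ := hVI k hlt
            obtain ⟨ihbm, -, -⟩ := ih m (Nat.lt_succ_of_le hm)
            have hρmk : ρ m ≤ ρ k := hρmono hm
            have hbk_le : b k ≤ b m := by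
              rw [ihb, ihbm]
              exact lemB k (ρ m) hρm (ρ k) hρmk (hρle k)
            refine ⟨by rw [hbk, hρk, ihb], ?_, ?_⟩
            · intro j hj hjk
              rcases Nat.lt_succ_iff_lt_or_eq.mp (Nat.lt_succ_of_le hjk)
                with hjk' | hjk'
              · have hjk'' : j ≤ k := by omega
                have hmj : ρ m ≤ j := by omega
                have : sentValue A C j ≤ b m := by
                  rw [ihbm]
                  exact lemB k (ρ m) hρm j hmj hjk''
                rw [hAk1]
                exact le_trans this (le_max_left _ _)
              · rw [hjk']
                exact hS (k + 1)
            · rw [hbk, hAk1]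
              exact le_trans hbk_le (le_max_left _ _)
          · refine ⟨by rw [hbk, hρk, ihb], ?_, by rw [hbk, heq]; exact ihba⟩
            intro j hj hjk
            rcases Nat.lt_succ_iff_lt_or_eq.mp (Nat.lt_succ_of_le hjk)
              with hjk' | hjk'
            · rw [heq]; exact ihmsg j (by omega) (by omega)
            · rw [hjk']; exact hS (k + 1)
          · refine ⟨by rw [hbk, hρk, ihb], ?_,
              by rw [hbk]; exact le_trans ihba (le_of_lt hgt)⟩
            intro j hj hjk
            rcases Nat.lt_succ_iff_lt_or_eq.mp (Nat.lt_succ_of_le hjk)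
              with hjk' | hjk'
            · exact le_trans (ihmsg j (by omega) (by omega)) (le_of_lt hgt)
            · rw [hjk']; exact hS (k + 1)
        · -- follower accepts a newer message, leader unchanged
          have hb1 : b (k + 1) ≤ A k := by
            rcases Nat.lt_succ_iff_lt_or_eq.mp (Nat.lt_succ_of_le hj2)
              with hj' | hj'
            · rw [hj3]; exact ihmsg j hj1 (by omega)
            · rw [hj3, hj']
              calc sentValue A C (k + 1) ≤ A (k + 1) := hS (k + 1)
                _ = A k := hA
          refine ⟨by rw [hj3, hj4], ?_, by rw [hA]; exact hb1⟩
          intro j' hj' hj'k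
          rw [hj4] at hj'
          rcases Nat.lt_succ_iff_lt_or_eq.mp (Nat.lt_succ_of_le hj'k)
            with h' | h'
          · rw [hA]; exact ihmsg j' (by omega) (by omega)
          · rw [h', hA]
            calc sentValue A C (k + 1) ≤ A (k + 1) := hS (k + 1)
              _ = A k := hA
  intro k
  exact (main k).2.2
end

section
/- Fix v_max > 0, an engine limit a_hi, braking limits a_lo' ≤ a_lo ≤ a_hi, an input a : [0,∞) → ℝ and a disturbance w : [0,∞) → ℝ with a_lo' + w(t) ≤ 0 ≤ a_hi + w(t) for all t. Let v, v' : [0,∞) → ℝ be differentiable with v'(t)'s dynamics v̇(t) = Φ(v(t), a(t), w(t); a_lo, a_hi) and v̇'(t) = Φ(v'(t), a(t), w(t); a_lo', a_hi), and v'(0) = v(0). Let s(t) = s0 + ∫₀ᵗ v and s'(t) = s0 + ∫₀ᵗ v'. Then s'(t) ≤ s(t) for all t ≥ 0; in particular, for any barrier B : [0,∞) → ℝ, if s(t) < B(t) for all t, then s'(t) < B(t) for all t. -/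
/-- Monotonicity of `Phi`: a stronger braking limit and a larger velocity
give a smaller saturated acceleration. -/
lemma Phi_mono (vmax alo alo' ahi a w u u' : ℝ) (h : u' ≤ u)
    (hlo : alo' ≤ alo) (hhi : alo ≤ ahi)
    (hw1 : alo' + w ≤ 0) (hw2 : 0 ≤ ahi + w) :
    Phi vmax alo' ahi u a w ≤ Phi vmax alo ahi u' a w := by
  unfold Phi
  split_ifs with h1 h2 h2
  · exact le_rfl
  · -- u saturated, u' not
    rcases h1 with ⟨hu0, haw⟩ | ⟨huv, haw⟩
    · exact absurd (Or.inl ⟨le_trans h hu0, haw⟩) h2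
    · have : 0 ≤ min ahi a + w := by
        rcases le_total ahi a with hc | hc
        · simpa [min_eq_left hc] using hw2
        · simpa [min_eq_right hc] using haw
      have : 0 ≤ max alo (min ahi a) + w :=
        le_trans this (by gcongr; exact le_max_right _ _)
      linarith
  · -- u' saturated, u not
    rcases h2 with ⟨hu0, haw⟩ | ⟨huv, haw⟩
    · have h1' : max alo' (min ahi a) + w ≤ 0 := by
        have hm : min ahi a + w ≤ 0 := le_trans (by gcongr; exact min_le_right _ _) haw
        rcases le_total alo' (min ahi a) with hc | hc
        · simpa [max_eq_right hc] using hm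
        · simpa [max_eq_left hc] using hw1
      exact h1'
    · exact absurd (Or.inr ⟨le_trans huv h, haw⟩) h1
  · gcongr

/-- **Ego Braking Limit Update** (paper's Theorem 3 in the
position-independent model): strengthening the ego braking limit from
`a_lo` to `a_lo' ≤ a_lo` while keeping the same input `a` and disturbance
`w` can only decrease the position; hence if the ego stays behind a barrier
`B` with limit `a_lo`, it also does with the stronger limit `a_lo'`. -/
theorem ego_braking_limit_update
    (vmax ahi alo alo' s0 : ℝ) (hvmax : 0 < vmax)
    (hlo : alo' ≤ alo) (hhi : alo ≤ ahi)
    (a w : ℝ → ℝ)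
    (hw : ∀ t, 0 ≤ t → alo' + w t ≤ 0 ∧ 0 ≤ ahi + w t)
    (v v' : ℝ → ℝ)
    (hv : ∀ t, 0 ≤ t → HasDerivAt v (Phi vmax alo ahi (v t) (a t) (w t)) t)
    (hv' : ∀ t, 0 ≤ t → HasDerivAt v' (Phi vmax alo' ahi (v' t) (a t) (w t)) t)
    (hinit : v' 0 = v 0) :
    (∀ t, 0 ≤ t →
      s0 + (∫ τ in (0:ℝ)..t, v' τ) ≤ s0 + ∫ τ in (0:ℝ)..t, v τ) ∧
    (∀ B : ℝ → ℝ,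
      (∀ t, 0 ≤ t → s0 + (∫ τ in (0:ℝ)..t, v τ) < B t) →
      ∀ t, 0 ≤ t → s0 + (∫ τ in (0:ℝ)..t, v' τ) < B t) := by
  -- pointwise comparison of velocities
  have hle : ∀ t, 0 ≤ t → v' t ≤ v t := by
    intro T hT
    have key : ∀ ε : ℝ, 0 < ε → v' T ≤ v T + ε * T := by
      intro ε hε
      have := image_le_of_deriv_right_lt_deriv_boundary'
        (f := v') (f' := fun x => Phi vmax alo' ahi (v' x) (a x) (w x))
        (B := fun x => v x + ε * x)
        (B' := fun x => Phi vmax alo ahi (v x) (a x) (w x) + ε)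
        (a := 0) (b := T)
        (fun x hx => ((hv' x hx.1).continuousAt).continuousWithinAt)
        (fun x hx => ((hv' x hx.1).hasDerivWithinAt))
        (by simp [hinit])
        (ContinuousOn.add
          (fun x hx => ((hv x hx.1).continuousAt).continuousWithinAt)
          (Continuous.continuousOn (by continuity)))
        (fun x hx => by
          exact ((hv x hx.1).add
            (((hasDerivAt_id' x).const_mul ε).congr_deriv (mul_one ε))).hasDerivWithinAt)
        ?_ (Set.right_mem_Icc.2 hT)
      · simpa using this
      · intro x hx heq
        have heq' : v' x = v x + ε * x := heq
        have hwx := hw x hx.1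
        have hcmp : Phi vmax alo' ahi (v' x) (a x) (w x)
            ≤ Phi vmax alo ahi (v x) (a x) (w x) := by
          apply Phi_mono vmax alo alo' ahi (a x) (w x) (v' x) (v x) _
            hlo hhi hwx.1 hwx.2
          have : 0 ≤ ε * x := mul_nonneg hε.le hx.1
          linarith
        show Phi vmax alo' ahi (v' x) (a x) (w x)
            < Phi vmax alo ahi (v x) (a x) (w x) + ε
        linarith
    have : ∀ ε : ℝ, 0 < ε → v' T ≤ v T + ε := by
      intro ε hε
      rcases eq_or_lt_of_le hT with h0 | h0
      · have := key 1 one_pos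
        rw [← h0] at this ⊢
        linarith
      · have := key (ε / T) (div_pos hε h0)
        rw [div_mul_cancel₀ _ (ne_of_gt h0)] at this
        linarith
    exact le_of_forall_pos_le_add this
  -- continuity, hence integrability
  have hcv : ∀ t : ℝ, 0 ≤ t → ContinuousOn v (Set.Icc 0 t) :=
    fun t _ x hx => ((hv x hx.1).continuousAt).continuousWithinAt
  have hcv' : ∀ t : ℝ, 0 ≤ t → ContinuousOn v' (Set.Icc 0 t) :=
    fun t _ x hx => ((hv' x hx.1).continuousAt).continuousWithinAt
  have hmain : ∀ t, 0 ≤ t →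
      s0 + (∫ τ in (0:ℝ)..t, v' τ) ≤ s0 + ∫ τ in (0:ℝ)..t, v τ := by
    intro t ht
    have hint : (∫ τ in (0:ℝ)..t, v' τ) ≤ ∫ τ in (0:ℝ)..t, v τ := by
      apply intervalIntegral.integral_mono_on ht
      · exact (hcv' t ht).intervalIntegrable_of_Icc ht
      · exact (hcv t ht).intervalIntegrable_of_Icc ht
      · exact fun x hx => hle x hx.1
    linarith
  refine ⟨hmain, fun B hB t ht => lt_of_le_of_lt (hmain t ht) (hB t ht)⟩
end

section
/- Fix v_max > 0, an engine limit a_hi, braking limits a_lo ≤ a_lo' ≤ a_hi, and a disturbance w : [0,∞) → ℝ with a_lo + w(t) ≤ 0 ≤ a_hi + w(t) for all t. Let v, v' : [0,∞) → ℝ be differentiable full-braking solutions: v̇(t) = Φ(v(t), a_lo, w(t); a_lo, a_hi) and v̇'(t) = Φ(v'(t), a_lo', w(t); a_lo', a_hi), with v(0) = v'(0), and positions s(t) = s0 + ∫₀ᵗ v, s'(t) = s0 + ∫₀ᵗ v'. Then s(t) ≤ s'(t) for all t ≥ 0; in particular, if an ego trajectory e : [0,∞) → ℝ satisfies e(t)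 < s(t) for all t, then also e(t) < s'(t) for all t. -/
lemma phi_mono (vmax alo alo' ahi x y w : ℝ)
    (hlo : alo ≤ alo') (hhi : alo' ≤ ahi) (hw1 : alo + w ≤ 0)
    (hyx : y ≤ x) :
    Phi vmax alo ahi x alo w ≤ Phi vmax alo' ahi y alo' w := by
  have h1 : alo ≤ ahi := le_trans hlo hhi
  unfold Phi
  rw [min_eq_right h1, min_eq_right hhi, max_self, max_self]
  split_ifs with hA hB hB
  · exact le_refl 0
  · rcases hA with ⟨hx0, _⟩ | ⟨hvx, hw0⟩
    · by_contra h
      push_neg at h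
      exact hB (Or.inl ⟨le_trans hyx hx0, by linarith⟩)
    · linarith
  · linarith
  · linarith

/-- **Leader Braking Limit Update** (paper's Theorem 4 in the
position-independent model): the full-braking trajectory's position is
monotone non-decreasing in the braking limit.  Hence if an ego trajectory
`e` stays behind the leader's full-braking position computed with braking
limit `a_lo`, it also stays behind the leader's full-braking position for
any weaker braking limit `a_lo' ≥ a_lo`. -/
theorem leader_braking_limit_update
    (vmax ahi alo alo' s0 : ℝ) (hvmax : 0 < vmax)
    (hlo : alo ≤ alo') (hhi : alo' ≤ ahi)
    (w : ℝ → ℝ)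
    (hw : ∀ t, 0 ≤ t → alo + w t ≤ 0 ∧ 0 ≤ ahi + w t)
    (v v' : ℝ → ℝ)
    (hv : ∀ t, 0 ≤ t → HasDerivAt v (Phi vmax alo ahi (v t) alo (w t)) t)
    (hv' : ∀ t, 0 ≤ t → HasDerivAt v' (Phi vmax alo' ahi (v' t) alo' (w t)) t)
    (hinit : v 0 = v' 0) :
    (∀ t, 0 ≤ t →
      s0 + (∫ τ in (0:ℝ)..t, v τ) ≤ s0 + ∫ τ in (0:ℝ)..t, v' τ) ∧
    (∀ e : ℝ → ℝ,
      (∀ t, 0 ≤ t → e t < s0 + ∫ τ in (0:ℝ)..t, v τ) →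
      ∀ t, 0 ≤ t → e t < s0 + ∫ τ in (0:ℝ)..t, v' τ) := by
  -- continuity
  have hcv : ∀ t, 0 ≤ t → ContinuousAt v t := fun t ht => (hv t ht).continuousAt
  have hcv' : ∀ t, 0 ≤ t → ContinuousAt v' t := fun t ht => (hv' t ht).continuousAt
  set g : ℝ → ℝ := fun t => v t - v' t with hg
  -- velocity comparison
  have hle : ∀ t, 0 ≤ t → v t ≤ v' t := by
    intro t0 ht0
    by_contra hcon
    push_neg at hcon
    set S : Set ℝ := Set.Icc 0 t0 ∩ {t | v t ≤ v' t} with hS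
    have h0S : (0:ℝ) ∈ S := ⟨⟨le_refl 0, ht0⟩, by simp [hinit]⟩
    have hgc : ContinuousOn g (Set.Icc 0 t0) := fun x hx =>
      (((hcv x hx.1).sub (hcv' x hx.1))).continuousWithinAt
    have hclosed : IsClosed S := by
      have : S = Set.Icc 0 t0 ∩ g ⁻¹' (Set.Iic 0) := by
        ext x; simp [hS, hg, sub_nonpos]
      rw [this]
      exact hgc.preimage_isClosed_of_isClosed isClosed_Icc isClosed_Iic
    have hcomp : IsCompact S :=
      IsCompact.of_isClosed_subset isCompact_Icc hclosed Set.inter_subset_left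
    set T := sSup S with hT
    have hTS : T ∈ S := hcomp.sSup_mem ⟨0, h0S⟩
    have hTt0 : T < t0 := lt_of_le_of_ne hTS.1.2 (by
      intro h; exact absurd (h ▸ hTS.2 : v t0 ≤ v' t0) (not_le.mpr hcon))
    have hT0 : 0 ≤ T := hTS.1.1
    -- on (T, t0], v' < v
    have hgt : ∀ x, T < x → x ≤ t0 → v' x < v x := by
      intro x hTx hxt0
      by_contra h
      push_neg at h
      have : x ∈ S := ⟨⟨le_trans hT0 hTx.le, hxt0⟩, h⟩
      exact absurd (le_csSup ⟨t0, fun y hy => hy.1.2⟩ this) (not_le.mpr hTx)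
    -- antitone on [T, t0]
    have hanti : AntitoneOn g (Set.Icc T t0) := by
      apply antitoneOn_of_deriv_nonpos (convex_Icc T t0)
      · exact hgc.mono (Set.Icc_subset_Icc_left hT0)
      · intro x hx
        rw [interior_Icc] at hx
        have hx0 : 0 ≤ x := le_trans hT0 hx.1.le
        exact (((hv x hx0).sub (hv' x hx0)).differentiableAt).differentiableWithinAt
      · intro x hx
        rw [interior_Icc] at hx
        have hx0 : 0 ≤ x := le_trans hT0 hx.1.le
        rw [hg, ((hv x hx0).fun_sub (hv' x hx0)).deriv]
        have := phi_mono vmax alo alo' ahi (v x) (v' x) (w x) hlo hhi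
          (hw x hx0).1 (hgt x hx.1 hx.2.le).le
        linarith
    have h1 : g t0 ≤ g T :=
      hanti ⟨le_refl T, hTt0.le⟩ ⟨hTt0.le, le_refl t0⟩ hTt0.le
    have h2 : g T ≤ 0 := sub_nonpos.mpr hTS.2
    have h3 : 0 < g t0 := sub_pos.mpr hcon
    linarith
  -- integral comparison
  have hmain : ∀ t, 0 ≤ t →
      s0 + (∫ τ in (0:ℝ)..t, v τ) ≤ s0 + ∫ τ in (0:ℝ)..t, v' τ := by
    intro t ht
    have hiv : IntervalIntegrable v MeasureTheory.volume 0 t :=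
      (ContinuousOn.intervalIntegrable (by
        rw [Set.uIcc_of_le ht]
        exact fun x hx => (hcv x hx.1).continuousWithinAt))
    have hiv' : IntervalIntegrable v' MeasureTheory.volume 0 t :=
      (ContinuousOn.intervalIntegrable (by
        rw [Set.uIcc_of_le ht]
        exact fun x hx => (hcv' x hx.1).continuousWithinAt))
    have := intervalIntegral.integral_mono_on ht hiv hiv'
      (fun x hx => hle x hx.1)
    linarith
  exact ⟨hmain, fun e he t ht => lt_of_lt_of_le (he t ht) (hmain t ht)⟩
end
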